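/- Let t, ℓ, n be positive integers with n ≥ 8tℓ + 4ℓ + 4t − 6. Let G be a graph on n vertices with minimum degree δ(G) ≥ ⌊n/2⌋, and let S ⊆ V(G) with |S| ≤ (t−1)(2ℓ+1). If the induced subgraph G − S contains a triangle, then G − S also contains a cycle of length 2ℓ+1. -/

import Mathlib

open SimpleGraph
open scoped Classical

/-- The largest real eigenvalue of the adjacency matrix of `G`
(the spectral radius of a graph). -/
noncomputable def specRad {V : Type} [Fintype V] (G : SimpleGraph V) : ℝ :=
  sSup {μ : ℝ | ∃ x : V → ℝ, x ≠ 0 ∧ (G.adjMatrix ℝ).mulVec x = μ • x}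

/-- `G` contains a (not necessarily induced) copy of `F` as a subgraph. -/
def ContainsCopy {α β : Type} (F : SimpleGraph α) (G : SimpleGraph β) : Prop :=
  ∃ f : α → β, Function.Injective f ∧ ∀ a b, F.Adj a b → G.Adj (f a) (f b)

/-- The Turán number `ex(n, F)`. -/
noncomputable def exNum {α : Type} (n : ℕ) (F : SimpleGraph α) : ℕ :=
  sSup {m : ℕ | ∃ G : SimpleGraph (Fin n), ¬ ContainsCopy F G ∧ G.edgeSet.ncard = m}

/-- The spectral Turán number `spex(n, F)`. -/
noncomputable def spex {α : Type} (n : ℕ) (F : SimpleGraph α) : ℝ :=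
  sSup {r : ℝ | ∃ G : SimpleGraph (Fin n), ¬ ContainsCopy F G ∧ specRad G = r}

/-- `t` vertex-disjoint copies of `F`. -/
def copies {α : Type} (t : ℕ) (F : SimpleGraph α) : SimpleGraph (Fin t × α) where
  Adj x y := x.1 = y.1 ∧ F.Adj x.2 y.2
  symm := ⟨fun _ _ h => ⟨h.1.symm, h.2.symm⟩⟩
  loopless := ⟨fun x h => F.loopless.irrefl x.2 h.2⟩

/-- The join `G + H` of two graphs. -/
def joinG {α β : Type} (G : SimpleGraph α) (H : SimpleGraph β) : SimpleGraph (α ⊕ β) where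
  Adj x y := match x, y with
    | Sum.inl a, Sum.inl b => G.Adj a b
    | Sum.inr a, Sum.inr b => H.Adj a b
    | Sum.inl _, Sum.inr _ => True
    | Sum.inr _, Sum.inl _ => True
  symm := by
    constructor
    rintro (a|a) (b|b) h
    · exact G.symm.symm _ _ h
    · trivial
    · trivial
    · exact H.symm.symm _ _ h
  loopless := by
    constructor
    rintro (a|a) h
    · exact G.loopless.irrefl a h
    · exact H.loopless.irrefl a h

/-- `S_{n,ℓ}^{+}`: the join of `K_ℓ` with an independent set of `n - ℓ` vertices,
plus one edge inside the independent set. -/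
def sPlus (n ℓ : ℕ) : SimpleGraph (Fin n) :=
  SimpleGraph.fromRel (fun i j => (i : ℕ) < ℓ ∨ ((i : ℕ) ≤ ℓ + 1 ∧ (j : ℕ) ≤ ℓ + 1))

/-- `S_{n,ℓ}^{++}`: the join of `K_ℓ` with an independent set of `n - ℓ` vertices,
plus a maximum matching inside the independent set. -/
def sPP (n ℓ : ℕ) : SimpleGraph (Fin n) :=
  SimpleGraph.fromRel (fun i j => (i : ℕ) < ℓ ∨ ((i : ℕ) - ℓ) / 2 = ((j : ℕ) - ℓ) / 2)

/-- The number of edges inside a vertex subset `A`. -/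
noncomputable def eIn {n : ℕ} (G : SimpleGraph (Fin n)) (A : Finset (Fin n)) : ℕ :=
  (G.induce (A : Set (Fin n))).edgeSet.ncard

/-- The number of edges between two disjoint vertex subsets `A` and `B`. -/
noncomputable def eCross {n : ℕ} (G : SimpleGraph (Fin n)) (A B : Finset (Fin n)) : ℕ :=
  Set.ncard {p : Fin n × Fin n | p.1 ∈ A ∧ p.2 ∈ B ∧ G.Adj p.1 p.2}

namespace OddAux
open scoped Fin.CommRing Fin.NatCast


variable {n : ℕ}

/-- A cycle of length `m+3` in `G` avoiding `S`. -/
def gdC (G : SimpleGraph (Fin n)) (S : Finset (Fin n)) (m : ℕ) : Prop :=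
  ∃ c : Fin (m+3) → Fin n, Function.Injective c ∧ (∀ i, c i ∉ S) ∧
    ∀ i, G.Adj (c i) (c (i+1))

lemma adjv {G : SimpleGraph (Fin n)} {M : ℕ} {c : Fin (M+3) → Fin n}
    (hadj : ∀ i, G.Adj (c i) (c (i+1))) (a b : ℕ) (ha : a < M+3) (hb : b < M+3)
    (hab : b = (a+1) % (M+3)) : G.Adj (c ⟨a, ha⟩) (c ⟨b, hb⟩) := by
  have h := hadj ⟨a, ha⟩
  have he : (⟨a, ha⟩ + 1 : Fin (M+3)) = ⟨b, hb⟩ := by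
    apply Fin.ext
    rw [Fin.val_add]
    simp [hab]
  rwa [he] at h

/-- Extend a cycle of length M+3 to one of length M+5 by replacing the vertex `c 1`
with a path `x, y, z` between `c 0` and `c 2`. -/
lemma extend {G : SimpleGraph (Fin n)} {S : Finset (Fin n)} {M : ℕ}
    (c : Fin (M+3) → Fin n) (hinj : Function.Injective c) (hcS : ∀ i, c i ∉ S)
    (hadj : ∀ i, G.Adj (c i) (c (i+1)))
    (x y z : Fin n) (hxS : x ∉ S) (hyS : y ∉ S) (hzS : z ∉ S)
    (hxy : G.Adj x y) (hyz : G.Adj y z)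
    (h0x : G.Adj (c 0) x) (hz2 : G.Adj z (c 2))
    (hxy' : x ≠ y) (hyz' : y ≠ z) (hxz : x ≠ z)
    (hxim : ∀ j : Fin (M+3), j ≠ 1 → x ≠ c j)
    (hyim : ∀ j : Fin (M+3), j ≠ 1 → y ≠ c j)
    (hzim : ∀ j : Fin (M+3), j ≠ 1 → z ≠ c j) :
    gdC G S (M+2) := by
  have hM0 : (0:ℕ) < M + 3 := by omega
  have e0 : (0 : Fin (M+3)) = ⟨0, hM0⟩ := by apply Fin.ext; simp
  have e2 : (2 : Fin (M+3)) = ⟨2, by omega⟩ := by apply Fin.ext; simp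
  -- value function on ℕ
  set F : ℕ → Fin n := fun v =>
    if v = 1 then x else if v = 2 then y else if v = 3 then z
    else if h : v - 2 < M + 3 then c ⟨v - 2, h⟩ else x with hF
  have hmk : ∀ (j : Fin (M+3)), ∀ (v : ℕ) (hv : v < M+3), j = ⟨v, hv⟩ → c j = c ⟨v, hv⟩ := by
    intro j v hv hj; rw [hj]
  -- interpret image-avoidance hypotheses on ℕ indices
  have hxim' : ∀ (v : ℕ) (hv : v < M+3), v ≠ 1 → x ≠ c ⟨v, hv⟩ := by
    intro v hv h1; apply hxim; intro hh; apply h1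
    have : ((⟨v, hv⟩ : Fin (M+3)) : ℕ) = ((1 : Fin (M+3)) : ℕ) := by rw [hh]
    simpa using this
  have hyim' : ∀ (v : ℕ) (hv : v < M+3), v ≠ 1 → y ≠ c ⟨v, hv⟩ := by
    intro v hv h1; apply hyim; intro hh; apply h1
    have : ((⟨v, hv⟩ : Fin (M+3)) : ℕ) = ((1 : Fin (M+3)) : ℕ) := by rw [hh]
    simpa using this
  have hzim' : ∀ (v : ℕ) (hv : v < M+3), v ≠ 1 → z ≠ c ⟨v, hv⟩ := by
    intro v hv h1; apply hzim; intro hh; apply h1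
    have : ((⟨v, hv⟩ : Fin (M+3)) : ℕ) = ((1 : Fin (M+3)) : ℕ) := by rw [hh]
    simpa using this
  refine ⟨fun j => F j.val, ?_, ?_, ?_⟩
  · -- injectivity
    intro a b hab
    have hav := a.isLt
    have hbv := b.isLt
    apply Fin.ext
    by_contra hne
    simp only [hF] at hab
    split_ifs at hab with h1 h2 h3 h4 h5 h6 h7 h8 h9 h10 h11 h12 h13 h14 h15 h16 h17 h18 h19 h20 h21 h22 h23 h24 <;>
      first
        | omega
        | (exact hxy' hab) | (exact hxy' hab.symm)
        | (exact hyz' hab) | (exact hyz' hab.symm)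
        | (exact hxz hab) | (exact hxz hab.symm)
        | (exact hxim' _ _ (by omega) hab) | (exact hxim' _ _ (by omega) hab.symm)
        | (exact hyim' _ _ (by omega) hab) | (exact hyim' _ _ (by omega) hab.symm)
        | (exact hzim' _ _ (by omega) hab) | (exact hzim' _ _ (by omega) hab.symm)
        | (have h := hinj hab; rw [Fin.mk.injEq] at h; omega)
  · -- avoids S
    intro j
    simp only [hF]
    split_ifs <;> first | exact hxS | exact hyS | exact hzS | exact hcS _
  · -- adjacency
    have hFeval : ∀ (v w : ℕ) (hw : w < M+3), v ≠ 1 → v ≠ 2 → v ≠ 3 → w = v - 2 →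
        F v = c ⟨w, hw⟩ := by
      intro v w hw h1 h2 h3 hwv
      subst hwv
      simp only [hF]
      rw [if_neg h1, if_neg h2, if_neg h3, dif_pos hw]
    have hF1 : F 1 = x := by simp [hF]
    have hF2 : F 2 = y := by simp [hF]
    have hF3 : F 3 = z := by simp [hF]
    intro j
    have hj := j.isLt
    have hsucc : ((j + 1 : Fin (M+5)) : ℕ) = (j.val + 1) % (M+5) := by
      rw [Fin.val_add]; simp
    show G.Adj (F j.val) (F ((j+1 : Fin (M+5)) : ℕ))
    rw [hsucc]
    rcases (by omega : j.val = 0 ∨ j.val = 1 ∨ j.val = 2 ∨ j.val = 3 ∨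
        (4 ≤ j.val ∧ j.val ≤ M+3) ∨ j.val = M+4) with h|h|h|h|⟨h4a,h4b⟩|h
    · rw [h]
      have hv : ((0:ℕ)+1) % (M+5) = 1 := Nat.mod_eq_of_lt (by omega)
      rw [hv, hF1, hFeval 0 0 hM0 (by omega) (by omega) (by omega) (by omega), ← e0]
      exact h0x
    · rw [h]
      have hv : ((1:ℕ)+1) % (M+5) = 2 := Nat.mod_eq_of_lt (by omega)
      rw [hv, hF1, hF2]
      exact hxy
    · rw [h]
      have hv : ((2:ℕ)+1) % (M+5) = 3 := Nat.mod_eq_of_lt (by omega)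
      rw [hv, hF2, hF3]
      exact hyz
    · rw [h]
      have hv : ((3:ℕ)+1) % (M+5) = 4 := Nat.mod_eq_of_lt (by omega)
      rw [hv, hF3, hFeval 4 2 (by omega) (by omega) (by omega) (by omega) (by omega), ← e2]
      exact hz2
    · have hv : (j.val+1) % (M+5) = j.val+1 := Nat.mod_eq_of_lt (by omega)
      rw [hv, hFeval j.val (j.val-2) (by omega) (by omega) (by omega) (by omega) rfl,
        hFeval (j.val+1) (j.val-1) (by omega) (by omega) (by omega) (by omega) (by omega)]
      refine adjv hadj _ _ _ _ ?_
      rw [Nat.mod_eq_of_lt (by omega)]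
      omega
    · rw [h]
      have hv : ((M+4:ℕ)+1) % (M+5) = 0 := by
        have h5 : M+4+1 = M+5 := by omega
        rw [h5, Nat.mod_self]
      rw [hv, hFeval (M+4) (M+2) (by omega) (by omega) (by omega) (by omega) (by omega),
        hFeval 0 0 hM0 (by omega) (by omega) (by omega) (by omega)]
      refine adjv hadj _ _ _ _ ?_
      have h5 : M+2+1 = M+3 := by omega
      rw [h5, Nat.mod_self]


lemma gd_to_copy {G : SimpleGraph (Fin n)} {S : Finset (Fin n)} {m : ℕ} (h : gdC G S m) :
    ContainsCopy (cycleGraph (m+3)) (G.induce ((S : Set (Fin n))ᶜ)) := by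
  obtain ⟨c, hinj, hcS, hadj⟩ := h
  refine ⟨fun a => ⟨c a, by simpa using hcS a⟩, ?_, ?_⟩
  · intro a b hab
    exact hinj (congrArg Subtype.val hab)
  · intro a b hab
    rw [cycleGraph_adj'] at hab
    have h1 : ((1 : Fin (m+3)) : ℕ) = 1 := by simp
    rcases hab with h' | h'
    · have : a - b = 1 := Fin.ext (by rw [h', h1])
      have hab' : a = b + 1 := by
        rw [sub_eq_iff_eq_add] at this
        rw [this]; ring
      subst hab'
      exact (hadj b).symm
    · have : b - a = 1 := Fin.ext (by rw [h', h1])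
      have hab' : b = a + 1 := by
        rw [sub_eq_iff_eq_add] at this
        rw [this]; ring
      subst hab'
      exact hadj a

lemma copy3_to_gd {G : SimpleGraph (Fin n)} {S : Finset (Fin n)}
    (h : ContainsCopy (cycleGraph 3) (G.induce ((S : Set (Fin n))ᶜ))) : gdC G S 0 := by
  obtain ⟨f, hinj, hmap⟩ := h
  refine ⟨fun a => (f a : Fin n), ?_, ?_, ?_⟩
  · intro a b hab
    exact hinj (Subtype.ext hab)
  · intro i
    intro hmem
    exact (f i).2 (Finset.mem_coe.mpr hmem)
  · intro i
    have hadj3 : ∀ a : Fin 3, (cycleGraph 3).Adj a (a+1) := by decide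
    exact hmap i (i+1) (hadj3 i)


lemma count_lemma (G : SimpleGraph (Fin n)) (S : Finset (Fin n)) (l : ℕ)
    (hdeg : ∀ x : Fin n, n/2 ≤ G.degree x)
    (harith : n + 2*S.card + 6*l ≤ 3*(n/2) + 2)
    (u v w : Fin n) (huv : u ≠ v) (huw : u ≠ w) (hvw : v ≠ w) :
    3*l - 1 ≤ (Finset.filter
      (fun p => 2 ≤ (({u,v,w} : Finset (Fin n)).filter (fun s => G.Adj p s)).card)
      Sᶜ).card := by
  classical
  set A : Finset (Fin n) := Sᶜ with hA
  set g : Fin n → ℕ := fun p => (({u,v,w} : Finset (Fin n)).filter (fun s => G.Adj p s)).card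
    with hg
  set X : Finset (Fin n) := A.filter (fun p => 2 ≤ g p) with hX
  -- degree bound for each vertex
  have hdegS : ∀ x : Fin n, n/2 ≤ (A.filter (fun p => G.Adj p x)).card + S.card := by
    intro x
    have hsub : G.neighborFinset x ⊆ (A.filter (fun p => G.Adj p x)) ∪ S := by
      intro p hp
      rw [mem_neighborFinset] at hp
      by_cases hpS : p ∈ S
      · exact Finset.mem_union_right _ hpS
      · refine Finset.mem_union_left _ ?_
        rw [Finset.mem_filter]
        exact ⟨by simpa [hA] using hpS, hp.symm⟩
    calc n/2 ≤ G.degree x := hdeg x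
    _ = (G.neighborFinset x).card := rfl
    _ ≤ ((A.filter (fun p => G.Adj p x)) ∪ S).card := Finset.card_le_card hsub
    _ ≤ (A.filter (fun p => G.Adj p x)).card + S.card := Finset.card_union_le _ _
  -- exchange sums
  have hex : ∑ p ∈ A, g p = ∑ x ∈ ({u,v,w} : Finset (Fin n)), (A.filter (fun p => G.Adj p x)).card := by
    simp only [hg, Finset.card_filter]
    rw [Finset.sum_comm]
  -- lower bound on the sum
  have hlow : 3*(n/2) ≤ (∑ p ∈ A, g p) + 3*S.card := by
    rw [hex]
    rw [Finset.sum_insert (by simp [huv, huw]), Finset.sum_insert (by simp [hvw]),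
      Finset.sum_singleton]
    have h1 := hdegS u
    have h2 := hdegS v
    have h3 := hdegS w
    omega
  -- upper bound on the sum
  have hup : ∑ p ∈ A, g p ≤ 3 * X.card + (A.card - X.card) := by
    have hsplit : ∑ p ∈ A, g p
        = ∑ p ∈ A.filter (fun p => 2 ≤ g p), g p + ∑ p ∈ A.filter (fun p => ¬ 2 ≤ g p), g p :=
      (Finset.sum_filter_add_sum_filter_not A _ g).symm
    have hb1 : ∑ p ∈ A.filter (fun p => 2 ≤ g p), g p ≤ 3 * X.card := by
      rw [hX]
      calc ∑ p ∈ A.filter (fun p => 2 ≤ g p), g p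
          ≤ ∑ _p ∈ A.filter (fun p => 2 ≤ g p), 3 := by
            refine Finset.sum_le_sum ?_
            intro p _
            calc g p ≤ ({u,v,w} : Finset (Fin n)).card := Finset.card_filter_le _ _
            _ ≤ 3 := by
              refine le_trans (Finset.card_insert_le _ _) ?_
              refine Nat.succ_le_succ ?_
              exact le_trans (Finset.card_insert_le _ _) (by simp)
      _ = 3 * (A.filter (fun p => 2 ≤ g p)).card := by rw [Finset.sum_const, smul_eq_mul]; ring
    have hb2 : ∑ p ∈ A.filter (fun p => ¬ 2 ≤ g p), g p ≤ A.card - X.card := by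
      have hc0 : (A.filter (fun p => 2 ≤ g p)).card + (A.filter (fun p => ¬ 2 ≤ g p)).card
          = A.card := Finset.card_filter_add_card_filter_not (fun p => 2 ≤ g p)
      have hc : (A.filter (fun p => ¬ 2 ≤ g p)).card = A.card - X.card := by
        rw [hX]; omega
      calc ∑ p ∈ A.filter (fun p => ¬ 2 ≤ g p), g p
          ≤ ∑ _p ∈ A.filter (fun p => ¬ 2 ≤ g p), 1 := by
            refine Finset.sum_le_sum ?_
            intro p hp
            rw [Finset.mem_filter] at hp
            omega
      _ = (A.filter (fun p => ¬ 2 ≤ g p)).card := by simp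
      _ = A.card - X.card := hc
    rw [hsplit]; omega
  have hAcard : A.card = n - S.card := by
    rw [hA, Finset.card_compl, Fintype.card_fin]
  have hXA : X.card ≤ A.card := by
    rw [hX]; exact Finset.card_filter_le _ _
  have hSn : S.card ≤ n := by
    have := Finset.card_le_univ S
    simpa using this
  omega


lemma two3 (G : SimpleGraph (Fin n)) {u v w p : Fin n} (huv : u ≠ v) (huw : u ≠ w) (hvw : v ≠ w)
    (h2 : 2 ≤ (({u,v,w} : Finset (Fin n)).filter (fun s => G.Adj p s)).card) :
    (G.Adj p u ∧ G.Adj p v) ∨ (G.Adj p v ∧ G.Adj p w) ∨ (G.Adj p u ∧ G.Adj p w) := by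
  by_contra hcon
  push_neg at hcon
  obtain ⟨h1, h2', h3⟩ := hcon
  have hle : (({u,v,w} : Finset (Fin n)).filter (fun s => G.Adj p s)).card ≤ 1 := by
    by_cases hu : G.Adj p u
    · have hsub : (({u,v,w} : Finset (Fin n)).filter (fun s => G.Adj p s)) ⊆ {u} := by
        intro s hs
        simp only [Finset.mem_filter, Finset.mem_insert, Finset.mem_singleton] at hs ⊢
        rcases hs with ⟨h | h | h, ha⟩ <;> subst h
        · rfl
        · exact absurd ha (h1 hu)
        · exact absurd ha (h3 hu)
      simpa using Finset.card_le_card hsub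
    · by_cases hv : G.Adj p v
      · have hsub : (({u,v,w} : Finset (Fin n)).filter (fun s => G.Adj p s)) ⊆ {v} := by
          intro s hs
          simp only [Finset.mem_filter, Finset.mem_insert, Finset.mem_singleton] at hs ⊢
          rcases hs with ⟨h | h | h, ha⟩ <;> subst h
          · exact absurd ha hu
          · rfl
          · exact absurd ha (h2' hv)
        simpa using Finset.card_le_card hsub
      · have hsub : (({u,v,w} : Finset (Fin n)).filter (fun s => G.Adj p s)) ⊆ {w} := by
          intro s hs
          simp only [Finset.mem_filter, Finset.mem_insert, Finset.mem_singleton] at hs ⊢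
          rcases hs with ⟨h | h | h, ha⟩ <;> subst h
          · exact absurd ha hu
          · exact absurd ha hv
          · rfl
        simpa using Finset.card_le_card hsub
  omega


lemma step (G : SimpleGraph (Fin n)) (S : Finset (Fin n)) (l j : ℕ) (hjl : j + 2 ≤ l)
    (hcount : ∀ u v w : Fin n, u ≠ v → u ≠ w → v ≠ w →
      3*l - 1 ≤ (Finset.filter
        (fun p => 2 ≤ (({u,v,w} : Finset (Fin n)).filter (fun s => G.Adj p s)).card)
        Sᶜ).card)
    (h : gdC G S (2*j)) : gdC G S (2*j+2) := by
  obtain ⟨c, hinj, hcS, hadj⟩ := h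
  by_contra hno
  -- basic index facts
  have hcim : ∀ (d p : Fin (2*j+3)), p ≠ 1 → c (d+1) ≠ c (p+d) := by
    intro d p hp he
    have h2 := hinj he
    have h3 : (1 : Fin (2*j+3)) + d = p + d := by rw [← h2]; ring
    exact hp (add_right_cancel h3).symm
  have idx1 : ∀ i : Fin (2*j+3), i ≠ i + 1 := by
    intro i he
    have h2 : i + 0 = i + 1 := by rw [add_zero]; exact he
    have h3 := add_left_cancel h2
    have h4 : ((0 : Fin (2*j+3)) : ℕ) = ((1 : Fin (2*j+3)) : ℕ) := by rw [h3]
    simp at h4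
  have idx2 : ∀ i : Fin (2*j+3), i ≠ i + 1 + 1 := by
    intro i he
    have h2 : i + 0 = i + (1 + 1) := by rw [add_zero, ← add_assoc]; exact he
    have h3 := add_left_cancel h2
    have h4 : ((0 : Fin (2*j+3)) : ℕ) = ((1 + 1 : Fin (2*j+3)) : ℕ) := by rw [h3]
    have h5 : ((1 + 1 : Fin (2*j+3)) : ℕ) = 2 := by
      rw [Fin.val_add]
      simp
    rw [h5] at h4
    simp only [Fin.val_zero] at h4
    omega
  -- the extension machine
  have EXT : ∀ (d : Fin (2*j+3)) (x y z : Fin n), x ∉ S → y ∉ S → z ∉ S →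
      G.Adj x y → G.Adj y z → G.Adj (c d) x → G.Adj z (c (2+d)) →
      x ≠ y → y ≠ z → x ≠ z →
      (∀ p : Fin (2*j+3), p ≠ 1 → x ≠ c (p+d)) →
      (∀ p : Fin (2*j+3), p ≠ 1 → y ≠ c (p+d)) →
      (∀ p : Fin (2*j+3), p ≠ 1 → z ≠ c (p+d)) → False := by
    intro d x y z hxS hyS hzS hxy hyz h0x hz2 hxy' hyz' hxz hxim hyim hzim
    apply hno
    refine extend (M := 2*j) (fun p => c (p + d)) ?_ (fun i => hcS _) ?_ x y z hxS hyS hzS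
      hxy hyz ?_ ?_ hxy' hyz' hxz hxim hyim hzim
    · intro a b hab
      exact add_right_cancel (hinj hab)
    · intro i
      have h2 := hadj (i + d)
      have he : (i + d) + 1 = (i + 1) + d := by ring
      rw [he] at h2
      exact h2
    · show G.Adj (c (0 + d)) x
      rw [zero_add]; exact h0x
    · exact hz2
  -- image of the cycle
  set imgF : Finset (Fin n) := Finset.image c Finset.univ with himgF
  have himgcard : imgF.card ≤ 2*j+3 := by
    refine le_trans (Finset.card_image_le) ?_
    simp
  set Fresh : Fin n → Prop := fun v => v ∉ S ∧ ∀ i, v ≠ c i with hFresh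
  -- witnesses extraction
  have getW : ∀ u v w : Fin n, u ≠ v → u ≠ w → v ≠ w →
      ∃ w1 w2 : Fin n, w1 ≠ w2 ∧
        (Fresh w1 ∧ 2 ≤ (({u,v,w} : Finset (Fin n)).filter (fun s => G.Adj w1 s)).card) ∧
        (Fresh w2 ∧ 2 ≤ (({u,v,w} : Finset (Fin n)).filter (fun s => G.Adj w2 s)).card) := by
    intro u v w huv huw hvw
    have hX := hcount u v w huv huw hvw
    set X := Finset.filter
        (fun p => 2 ≤ (({u,v,w} : Finset (Fin n)).filter (fun s => G.Adj p s)).card) Sᶜ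
      with hXdef
    have hsd : X.card - imgF.card ≤ (X \ imgF).card := Finset.le_card_sdiff _ _
    have h2c : 1 < (X \ imgF).card := by omega
    obtain ⟨w1, hw1, w2, hw2, hww⟩ := Finset.one_lt_card.mp h2c
    have hprop : ∀ x ∈ X \ imgF, Fresh x ∧
        2 ≤ (({u,v,w} : Finset (Fin n)).filter (fun s => G.Adj x s)).card := by
      intro x hx
      rw [Finset.mem_sdiff] at hx
      obtain ⟨hxX, hximg⟩ := hx
      rw [hXdef, Finset.mem_filter] at hxX
      refine ⟨⟨by simpa using hxX.1, ?_⟩, hxX.2⟩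
      intro i he
      exact hximg (by rw [he, himgF]; exact Finset.mem_image_of_mem c (Finset.mem_univ i))
    exact ⟨w1, w2, hww, hprop w1 hw1, hprop w2 hw2⟩
  -- distinctness of nearby cycle vertices
  have cne1 : ∀ i : Fin (2*j+3), c i ≠ c (i+1) := fun i he => (idx1 i) (hinj he)
  have cne2 : ∀ i : Fin (2*j+3), c i ≠ c (i+1+1) := fun i he => (idx2 i) (hinj he)
  have cne3 : ∀ i : Fin (2*j+3), c (i+1) ≠ c (i+1+1) := fun i he => (idx1 (i+1)) (hinj he)
  -- Fact F1 : no "two consecutive ears"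
  have F1 : ∀ (i : Fin (2*j+3)) (q p : Fin n), Fresh q → Fresh p → q ≠ p →
      G.Adj (c i) q → G.Adj (c (i+1)) q → G.Adj (c (i+1)) p → G.Adj (c (i+1+1)) p → False := by
    intro i q p hq hp hqp hq0 hq1 hp1 hp2
    have hp2' : G.Adj p (c (2+i)) := by
      have h2 := hp2.symm
      rwa [show (i+1+1 : Fin (2*j+3)) = 2+i by ring] at h2
    exact EXT i q (c (i+1)) p hq.1 (hcS _) hp.1 hq1.symm hp1 hq0 hp2'
      (hq.2 _) (Ne.symm (hp.2 _)) hqp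
      (fun p' _ => hq.2 _) (fun p' hp' => hcim i p' hp') (fun p' _ => hp.2 _)
  -- Fact F2 : no two fresh common neighbours of c i and c (i+2)
  have F2 : ∀ (i : Fin (2*j+3)) (b b' : Fin n), Fresh b → Fresh b' → b ≠ b' →
      G.Adj (c i) b → G.Adj (c (i+1+1)) b → G.Adj (c i) b' → G.Adj (c (i+1+1)) b' → False := by
    intro i b b' hb hb' hbb hbi hbi2 hb'i hb'i2
    have hb'2' : G.Adj b' (c (2+i)) := by
      have h2 := hb'i2.symm
      rwa [show (i+1+1 : Fin (2*j+3)) = 2+i by ring] at h2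
    have hc12 : G.Adj (c (i+1)) (c (2+i)) := by
      have h2 := hadj (i+1)
      rwa [show (i+1+1 : Fin (2*j+3)) = 2+i by ring] at h2
    obtain ⟨w1, w2, hww, ⟨hw1F, hw1c⟩, _⟩ := getW (c (i+1)) b b'
      (Ne.symm (hb.2 _)) (Ne.symm (hb'.2 _)) hbb
    rcases two3 G (Ne.symm (hb.2 _)) (Ne.symm (hb'.2 _)) hbb hw1c with
      ⟨hwu, hwb⟩ | ⟨hwb, hwb'⟩ | ⟨hwu, hwb'⟩
    · -- w1 adj c(i+1) and b : new cycle c i, b, w1, c (i+1), c (i+2), ...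
      exact EXT i b w1 (c (i+1)) hb.1 hw1F.1 (hcS _) hwb.symm hwu hbi hc12
        (Ne.symm hwb.ne) (hw1F.2 _) (hb.2 _)
        (fun p' _ => hb.2 _) (fun p' _ => hw1F.2 _) (fun p' hp' => hcim i p' hp')
    · -- w1 adj b and b' : new cycle c i, b, w1, b', c (i+2), ...
      exact EXT i b w1 b' hb.1 hw1F.1 hb'.1 hwb.symm hwb' hbi hb'2'
        (Ne.symm hwb.ne) hwb'.ne hbb
        (fun p' _ => hb.2 _) (fun p' _ => hw1F.2 _) (fun p' _ => hb'.2 _)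
    · -- w1 adj c(i+1) and b' : new cycle c i, c (i+1), w1, b', c(i+2), ...
      exact EXT i (c (i+1)) w1 b' (hcS _) hw1F.1 hb'.1 hwu.symm hwb' (hadj i) hb'2'
        (Ne.symm (hw1F.2 _)) hwb'.ne (Ne.symm (hb'.2 _))
        (fun p' hp' => hcim i p' hp') (fun p' _ => hw1F.2 _) (fun p' _ => hb'.2 _)
  -- the alternating predicate
  set Pn : Fin (2*j+3) → Prop :=
    fun i => ∃ q, Fresh q ∧ G.Adj (c i) q ∧ G.Adj (c (i+1)) q with hPn
  have keyA : ∀ i, ¬ (Pn i ∧ Pn (i+1)) := by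
    rintro i ⟨⟨q, hqF, hq0, hq1⟩, ⟨p, hpF, hp1', hp2'⟩⟩
    by_cases hqp : q = p
    · subst hqp
      obtain ⟨w1, w2, hww, ⟨hw1F, hw1c⟩, ⟨hw2F, hw2c⟩⟩ :=
        getW (c i) (c (i+1)) (c (i+1+1)) (cne1 i) (cne2 i) (cne3 i)
      have hkey : ∀ x : Fin n, Fresh x →
          2 ≤ (({c i, c (i+1), c (i+1+1)} : Finset (Fin n)).filter
            (fun s => G.Adj x s)).card → x = q := by
        intro x hxF hxc
        rcases two3 G (cne1 i) (cne2 i) (cne3 i) hxc with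
          ⟨ha, hb⟩ | ⟨hb, hc⟩ | ⟨ha, hc⟩
        · by_contra hne
          exact F1 i x q hxF hqF hne ha.symm hb.symm hp1' hp2'
        · by_contra hne
          exact F1 i q x hqF hxF (fun h2 => hne h2.symm) hq0 hq1 hb.symm hc.symm
        · by_contra hne
          exact F2 i x q hxF hqF hne ha.symm hc.symm hq0 hp2'
      exact hww ((hkey w1 hw1F hw1c).trans (hkey w2 hw2F hw2c).symm)
    · exact F1 i q p hqF hpF hqp hq0 hq1 hp1' hp2'
  have keyB : ∀ i, Pn i ∨ Pn (i+1) := by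
    intro i
    by_contra hcon
    push_neg at hcon
    obtain ⟨hni, hni1⟩ := hcon
    obtain ⟨w1, w2, hww, ⟨hw1F, hw1c⟩, ⟨hw2F, hw2c⟩⟩ :=
      getW (c i) (c (i+1)) (c (i+1+1)) (cne1 i) (cne2 i) (cne3 i)
    have hD : ∀ x : Fin n, Fresh x →
        2 ≤ (({c i, c (i+1), c (i+1+1)} : Finset (Fin n)).filter
          (fun s => G.Adj x s)).card → G.Adj (c i) x ∧ G.Adj (c (i+1+1)) x := by
      intro x hxF hxc
      rcases two3 G (cne1 i) (cne2 i) (cne3 i) hxc with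
        ⟨ha, hb⟩ | ⟨hb, hc⟩ | ⟨ha, hc⟩
      · exact absurd ⟨x, hxF, ha.symm, hb.symm⟩ hni
      · exact absurd ⟨x, hxF, hb.symm, hc.symm⟩ hni1
      · exact ⟨ha.symm, hc.symm⟩
    obtain ⟨ha1, hc1⟩ := hD w1 hw1F hw1c
    obtain ⟨ha2, hc2⟩ := hD w2 hw2F hw2c
    exact F2 i w1 w2 hw1F hw2F hww ha1 hc1 ha2 hc2
  -- parity contradiction around the odd cycle
  have key : ∀ i, Pn i ↔ ¬ Pn (i+1) :=
    fun i => ⟨fun h2 h' => keyA i ⟨h2, h'⟩, fun h' => (keyB i).resolve_right h'⟩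
  have key' : ∀ a : ℕ, Pn ((a : ℕ) : Fin (2*j+3)) ↔ ¬ Pn ((a+1 : ℕ) : Fin (2*j+3)) := by
    intro a
    have hc2 : ((a+1:ℕ) : Fin (2*j+3)) = ((a : ℕ) : Fin (2*j+3)) + 1 := by push_cast; ring
    rw [hc2]; exact key _
  have hstep : ∀ a : ℕ, Pn ((a+1 : ℕ) : Fin (2*j+3)) ↔ ¬ Pn ((a : ℕ) : Fin (2*j+3)) := by
    intro a
    constructor
    · intro hp hq
      exact (key' a).mp hq hp
    · intro hq
      by_contra hp
      exact hq ((key' a).mpr hp)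
  have heven : ∀ a : ℕ, Pn ((2*a : ℕ) : Fin (2*j+3)) ↔ Pn ((0:ℕ) : Fin (2*j+3)) := by
    intro a
    induction a with
    | zero => norm_num
    | succ a ih =>
      have e1 : 2*(a+1) = (2*a+1)+1 := by ring
      rw [e1, hstep (2*a+1), hstep (2*a), not_not]
      exact ih
  have hfin : ((2*j+3 : ℕ) : Fin (2*j+3)) = ((0:ℕ) : Fin (2*j+3)) := by
    haveI : NeZero (2*j+3) := ⟨by omega⟩
    rw [Fin.natCast_self]
    simp
  have hodd : Pn ((2*j+3 : ℕ) : Fin (2*j+3)) ↔ ¬ Pn ((0:ℕ) : Fin (2*j+3)) := by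
    have h2 := heven (j+1)
    have e2 : (2*(j+1) : ℕ) = 2*j+2 := by ring
    rw [e2] at h2
    have h3 := hstep (2*j+2)
    exact h3.trans (not_congr h2)
  rw [hfin] at hodd
  exact iff_not_self hodd


end OddAux

theorem triangle_to_long_odd_cycle (t l n : ℕ) (ht : 1 ≤ t) (hl : 1 ≤ l)
    (hn : 8*t*l + 4*l + 4*t - 6 ≤ n)
    (G : SimpleGraph (Fin n)) (hdelta : n/2 ≤ G.minDegree)
    (S : Finset (Fin n)) (hS : S.card ≤ (t-1)*(2*l+1))
    (htri : ContainsCopy (cycleGraph 3) (G.induce ((S : Set (Fin n))ᶜ))) :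
    ContainsCopy (cycleGraph (2*l+1)) (G.induce ((S : Set (Fin n))ᶜ)) := by
  classical
  obtain ⟨T, rfl⟩ : ∃ T, t = T+1 := ⟨t-1, by omega⟩
  have hq : 8*(T+1)*l = 8*(T*l) + 8*l := by ring
  rw [hq] at hn
  have hs2 : (T+1-1)*(2*l+1) = 2*(T*l) + T := by simp; ring
  rw [hs2] at hS
  obtain ⟨P, hP⟩ : ∃ P, P = T*l := ⟨T*l, rfl⟩
  rw [← hP] at hn hS
  have harith : n + 2*S.card + 6*l ≤ 3*(n/2) + 2 := by omega
  have hdeg : ∀ x : Fin n, n/2 ≤ G.degree x :=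
    fun x => le_trans hdelta (G.minDegree_le_degree x)
  have hcount : ∀ u v w : Fin n, u ≠ v → u ≠ w → v ≠ w →
      3*l - 1 ≤ (Finset.filter
        (fun p => 2 ≤ (({u,v,w} : Finset (Fin n)).filter (fun s => G.Adj p s)).card)
        Sᶜ).card :=
    fun u v w huv huw hvw => OddAux.count_lemma G S l hdeg harith u v w huv huw hvw
  have main : ∀ a : ℕ, a ≤ l - 1 → OddAux.gdC G S (2*a) := by
    intro a
    induction a with
    | zero =>
      intro _
      exact OddAux.copy3_to_gd htri
    | succ a ih =>
      intro ha
      have h1 := ih (by omega)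
      have h2 := OddAux.step G S l a (by omega) hcount h1
      rw [show 2*(a+1) = 2*a+2 from by ring]
      exact h2
  have hfin := main (l-1) le_rfl
  have hcopy := OddAux.gd_to_copy hfin
  have e : 2*(l-1)+3 = 2*l+1 := by omega
  rw [e] at hcopy
  exact hcopy
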